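/- Every bipartite biregular graph with degrees r > s ≥ 2, odd diameter d = 2m+1, and order attaining the Moore bound M(r,s;2m+1) = ⌊N2'/ρ⌋·(ρ+σ) has girth at most 4m. -/

import Mathlib

open Finset

lemma girth_le_of_cycle {V : Type*} {G : SimpleGraph V} {a : V} {w : G.Walk a a}
    (hw : w.IsCycle) : G.girth ≤ w.length := by
  have h1 : G.egirth ≤ (w.length : ℕ∞) := by
    rw [SimpleGraph.egirth]
    exact iInf_le_of_le a (iInf_le_of_le w (iInf_le _ hw))
  simpa [SimpleGraph.girth] using ENat.toNat_le_toNat h1 (by simp)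

lemma exists_short_cycle {V : Type*} [DecidableEq V] {G : SimpleGraph V} {u0 v w1 w2 : V}
    (h1 : G.Adj v w1) (h2 : G.Adj v w2) (hne : w1 ≠ w2)
    (p1 : G.Walk u0 w1) (p2 : G.Walk u0 w2)
    (hl1 : p1.length < G.dist u0 v) (hl2 : p2.length < G.dist u0 v) :
    ∃ c : G.Walk v v, c.IsCycle ∧ c.length ≤ p1.length + p2.length + 2 := by
  have hmem : ∀ {w : V} (p : G.Walk u0 w), p.length < G.dist u0 v → v ∉ p.support := by
    intro w p hp hv
    have h1 : G.dist u0 v ≤ (p.takeUntil v hv).length := G.dist_le _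
    have h2 := p.length_takeUntil_le hv
    omega
  have hv1 : v ∉ p1.support := hmem p1 hl1
  have hv2 : v ∉ p2.support := hmem p2 hl2
  set p' := (p1.reverse.append p2).bypass with hp'
  have hp'path : p'.IsPath := SimpleGraph.Walk.bypass_isPath _
  have hp'len : p'.length ≤ p1.length + p2.length := by
    refine le_trans (SimpleGraph.Walk.length_bypass_le _) ?_
    simp [SimpleGraph.Walk.length_append]
  have hvp' : v ∉ p'.support := by
    intro hv
    have h := SimpleGraph.Walk.support_bypass_subset _ hv
    rw [SimpleGraph.Walk.mem_support_append_iff] at h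
    rcases h with h | h
    · rw [SimpleGraph.Walk.support_reverse, List.mem_reverse] at h
      exact hv1 h
    · exact hv2 h
  set q := p'.concat h2.symm with hqdef
  have hq : q.IsPath := by
    have hr : q.reverse.IsPath := by
      rw [hqdef, SimpleGraph.Walk.reverse_concat]
      refine SimpleGraph.Walk.IsPath.cons hp'path.reverse ?_
      rw [SimpleGraph.Walk.support_reverse, List.mem_reverse]
      exact hvp'
    have := hr.reverse
    simpa using this
  have hnotedge : s(v, w1) ∉ q.edges := by
    intro hQ
    rw [hqdef, SimpleGraph.Walk.edges_concat] at hQ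
    rw [List.concat_eq_append, List.mem_append, List.mem_singleton] at hQ
    rcases hQ with hQ1 | hQ1
    · exact hvp' (SimpleGraph.Walk.fst_mem_support_of_mem_edges p' hQ1)
    · rw [Sym2.eq_iff] at hQ1
      rcases hQ1 with ⟨h, h'⟩ | ⟨-, h⟩
      · exact G.loopless.irrefl _ (h' ▸ h1)
      · exact hne h
  refine ⟨SimpleGraph.Walk.cons h1 q, ?_, ?_⟩
  · rw [SimpleGraph.Walk.cons_isCycle_iff]
    exact ⟨hq, hnotedge⟩
  · have : q.length = p'.length + 1 := SimpleGraph.Walk.length_concat _ _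
    simp only [SimpleGraph.Walk.length_cons]
    omega

lemma stmt4_arith_aux {r s S : ℕ} (hs : 2 ≤ s) (hrs : s < r) (hS : 1 ≤ S) :
    s * (1 + s * (r - 1) * S) < r * (1 + r * (s - 1) * S) := by
  obtain ⟨b, rfl⟩ : ∃ b, s = b + 2 := ⟨s - 2, by omega⟩
  obtain ⟨c, rfl⟩ : ∃ c, r = b + 3 + c := ⟨r - (b + 3), by omega⟩
  have he1 : b + 3 + c - 1 = b + 2 + c := by omega
  have he2 : b + 2 - 1 = b + 1 := by omega
  rw [he1, he2]
  have hXY : (b + 2) * ((b + 2) * (b + 2 + c)) ≤ (b + 3 + c) * ((b + 3 + c) * (b + 1)) := by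
    nlinarith [Nat.zero_le (b * b * c), Nat.zero_le (b * c * c), Nat.zero_le (b * c),
      Nat.zero_le (c * c), Nat.zero_le (b * b), Nat.zero_le b, Nat.zero_le c]
  calc (b + 2) * (1 + (b + 2) * (b + 2 + c) * S)
      = (b + 2) + (b + 2) * ((b + 2) * (b + 2 + c)) * S := by ring
    _ < (b + 3 + c) + (b + 3 + c) * ((b + 3 + c) * (b + 1)) * S := by
        refine add_lt_add_of_lt_of_le (by omega) ?_
        exact Nat.mul_le_mul_right _ hXY
    _ = (b + 3 + c) * (1 + (b + 3 + c) * (b + 1) * S) := by ring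

/-- Every bipartite biregular graph with degrees `r > s ≥ 2`, odd diameter
`2m+1`, and order attaining the Moore bound `⌊N2'/ρ⌋·(ρ+σ)` has girth at most `4m`. -/
theorem stmt_4 {V : Type*} [Fintype V] (G : SimpleGraph V) (V1 V2 : Finset V)
    (hpart : ∀ v, (v ∈ V1 ∧ v ∉ V2) ∨ (v ∈ V2 ∧ v ∉ V1))
    (hbip : ∀ u v, G.Adj u v → (u ∈ V1 ∧ v ∈ V2) ∨ (u ∈ V2 ∧ v ∈ V1))
    (r s m : ℕ) (hs : 2 ≤ s) (hrs : s < r) (hm : 1 ≤ m)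
    (hdeg1 : ∀ v ∈ V1, (G.neighborSet v).ncard = r)
    (hdeg2 : ∀ v ∈ V2, (G.neighborSet v).ncard = s)
    (hconn : G.Connected) (hdiam : G.diam = 2 * m + 1)
    (horder : V1.card + V2.card =
      ((1 + s * (r - 1) * ∑ i ∈ Finset.range m, ((r - 1) * (s - 1)) ^ i) / (r / Nat.gcd r s)) *
        (r / Nat.gcd r s + s / Nat.gcd r s)) :
    G.girth ≤ 4 * m := by
  classical
  by_contra hgir
  push_neg at hgir
  have hcyc : ∀ (a : V) (w : G.Walk a a), w.IsCycle → 4 * m < w.length :=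
    fun a w hw => lt_of_lt_of_le hgir (girth_le_of_cycle hw)
  -- degrees as filter cardinalities
  set nb : V → Finset V := fun v => univ.filter (fun w => G.Adj v w) with hnb
  have hns : ∀ v : V, G.neighborSet v = ↑(nb v) := by
    intro v; ext w; simp [hnb, SimpleGraph.mem_neighborSet]
  have hdeg1' : ∀ v ∈ V1, (nb v).card = r := by
    intro v hv; have := hdeg1 v hv; rwa [hns v, Set.ncard_coe_finset] at this
  have hdeg2' : ∀ v ∈ V2, (nb v).card = s := by
    intro v hv; have := hdeg2 v hv; rwa [hns v, Set.ncard_coe_finset] at this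
  have hopp1 : ∀ a b2 : V, G.Adj a b2 → a ∈ V1 → b2 ∈ V2 := by
    intro a b2 hadj ha
    rcases hbip _ _ hadj with ⟨-, h⟩ | ⟨h, -⟩
    · exact h
    · rcases hpart a with ⟨-, hn⟩ | ⟨-, hn⟩
      · exact absurd h hn
      · exact absurd ha hn
  have hopp2 : ∀ a b2 : V, G.Adj a b2 → a ∈ V2 → b2 ∈ V1 := by
    intro a b2 hadj ha
    rcases hbip _ _ hadj with ⟨h, -⟩ | ⟨-, h⟩
    · rcases hpart a with ⟨-, hn⟩ | ⟨-, hn⟩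
      · exact absurd ha hn
      · exact absurd h hn
    · exact h
  -- a vertex in V1
  obtain ⟨v0⟩ := hconn.nonempty
  have hexu0 : ∃ u0, u0 ∈ V1 := by
    rcases hpart v0 with ⟨h, -⟩ | ⟨h, -⟩
    · exact ⟨v0, h⟩
    · have hc : (nb v0).card = s := hdeg2' v0 h
      have hpos : (nb v0).Nonempty := by
        rw [← Finset.card_pos, hc]; omega
      obtain ⟨w, hw⟩ := hpos
      have hadj : G.Adj v0 w := by simpa [hnb] using hw
      rcases hbip _ _ hadj with ⟨h1, -⟩ | ⟨-, h2⟩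
      · rcases hpart v0 with ⟨-, hn⟩ | ⟨-, hn⟩ <;> [exact ⟨v0, h1⟩; exact absurd h1 hn]
      · exact ⟨w, h2⟩
  obtain ⟨u0, hu0⟩ := hexu0
  -- parity along walks
  have hwalkpar : ∀ {a b : V} (p : G.Walk a b), ((a ∈ V1 ↔ b ∈ V1) ↔ Even p.length) := by
    intro a b p
    induction p with
    | nil => simp
    | @cons a c b h p ih =>
      have h1 := hbip _ _ h
      have h2 := hpart a
      have h3 := hpart c
      rw [SimpleGraph.Walk.length_cons, Nat.even_add_one]
      tauto
  have hpar : ∀ v : V, v ∈ V1 ↔ Even (G.dist u0 v) := by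
    intro v
    obtain ⟨p, hp⟩ := (hconn u0 v).exists_walk_length_eq_dist
    have h := hwalkpar p
    rw [hp] at h
    tauto
  -- adjacent vertices: distances differ by exactly one
  have hadjd : ∀ v w : V, G.Adj v w →
      (G.dist u0 w = G.dist u0 v + 1 ∨ G.dist u0 v = G.dist u0 w + 1) := by
    intro v w hvw
    have t1 : G.dist u0 w ≤ G.dist u0 v + 1 := by
      have h := hconn.dist_triangle (u := u0) (v := v) (w := w)
      rwa [SimpleGraph.dist_eq_one_iff_adj.mpr hvw] at h
    have t2 : G.dist u0 v ≤ G.dist u0 w + 1 := by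
      have h := hconn.dist_triangle (u := u0) (v := w) (w := v)
      rwa [SimpleGraph.dist_eq_one_iff_adj.mpr hvw.symm] at h
    have t3 : ¬ (v ∈ V1 ↔ w ∈ V1) := by
      rcases hbip _ _ hvw with ⟨h1, h2⟩ | ⟨h1, h2⟩ <;>
        rcases hpart v with ⟨hv1, hv2⟩ | ⟨hv1, hv2⟩ <;>
        rcases hpart w with ⟨hw1, hw2⟩ | ⟨hw1, hw2⟩ <;> tauto
    have t4 : ¬ (Even (G.dist u0 v) ↔ Even (G.dist u0 w)) := by
      have hv := hpar v; have hw := hpar w; tauto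
    rw [Nat.even_iff, Nat.even_iff] at t4
    omega
  -- level sets
  set L : ℕ → Finset V := fun i => univ.filter (fun v => G.dist u0 v = i) with hLdef
  have hLmem : ∀ i v, v ∈ L i ↔ G.dist u0 v = i := by
    intro i v; simp [hLdef]
  -- at most one neighbour one level down
  have hK3 : ∀ (d : ℕ) (w : V), w ∈ L (d + 1) → d + 1 ≤ 2 * m →
      ((L d).filter (fun x => G.Adj w x)).card ≤ 1 := by
    intro d w hw hdm
    rw [Finset.card_le_one]
    intro a ha b hb
    by_contra hab
    rw [Finset.mem_filter] at ha hb
    obtain ⟨ha1, ha2⟩ := ha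
    obtain ⟨hb1, hb2⟩ := hb
    rw [hLmem] at ha1 hb1 hw
    obtain ⟨pa, hpa⟩ := (hconn u0 a).exists_walk_length_eq_dist
    obtain ⟨pb, hpb⟩ := (hconn u0 b).exists_walk_length_eq_dist
    have hla : pa.length < G.dist u0 w := by omega
    have hlb : pb.length < G.dist u0 w := by omega
    obtain ⟨c, hc, hclen⟩ := exists_short_cycle ha2 hb2 hab pa pb hla hlb
    have := hcyc _ c hc
    omega
  -- lower bound on up-neighbours
  have hK4 : ∀ (d : ℕ) (v : V), v ∈ L d → 1 ≤ d → d + 1 ≤ 2 * m →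
      (nb v).card - 1 ≤ ((L (d + 1)).filter (fun w => G.Adj v w)).card := by
    intro d v hv hd1 hd2
    have hvd : G.dist u0 v = d := (hLmem _ _).mp hv
    have hsplit : nb v =
        ((L (d - 1)).filter (fun w => G.Adj v w)) ∪ ((L (d + 1)).filter (fun w => G.Adj v w)) := by
      ext w
      simp only [Finset.mem_union, Finset.mem_filter, hnb, Finset.mem_filter, Finset.mem_univ,
        true_and, hLmem]
      constructor
      · intro hadj
        rcases hadjd v w hadj with h | h
        · exact Or.inr ⟨by omega, hadj⟩
        · exact Or.inl ⟨by omega, hadj⟩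
      · rintro (⟨-, h⟩ | ⟨-, h⟩) <;> exact h
    have hdisj : Disjoint ((L (d - 1)).filter (fun w => G.Adj v w))
        ((L (d + 1)).filter (fun w => G.Adj v w)) := by
      rw [Finset.disjoint_left]
      intro x hx1 hx2
      rw [Finset.mem_filter, hLmem] at hx1 hx2
      omega
    have hcard := Finset.card_union_of_disjoint hdisj
    rw [hsplit, hcard]
    have hone : ((L (d - 1)).filter (fun x => G.Adj v x)).card ≤ 1 := by
      have hd' : d - 1 + 1 = d := by omega
      have hv' : v ∈ L (d - 1 + 1) := by rw [hd']; exact hv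
      exact hK3 (d - 1) v hv' (by omega)
    omega
  -- level growth
  have hK5 : ∀ (d : ℕ), 1 ≤ d → d + 1 ≤ 2 * m → ∀ c : ℕ,
      (∀ v ∈ L d, (nb v).card = c) → (L d).card * (c - 1) ≤ (L (d + 1)).card := by
    intro d hd1 hd2 c hc
    have hdisj : ∀ v1 ∈ L d, ∀ v2 ∈ L d, v1 ≠ v2 →
        Disjoint ((L (d + 1)).filter (fun w => G.Adj v1 w))
          ((L (d + 1)).filter (fun w => G.Adj v2 w)) := by
      intro v1 hv1 v2 hv2 hne
      rw [Finset.disjoint_left]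
      intro w hw1 hw2
      rw [Finset.mem_filter] at hw1 hw2
      have h2card : 1 < ((L d).filter (fun x => G.Adj w x)).card := by
        rw [Finset.one_lt_card]
        exact ⟨v1, by rw [Finset.mem_filter]; exact ⟨hv1, hw1.2.symm⟩,
          v2, by rw [Finset.mem_filter]; exact ⟨hv2, hw2.2.symm⟩, hne⟩
      have := hK3 d w hw1.1 hd2
      omega
    calc (L d).card * (c - 1) = ∑ _v ∈ L d, (c - 1) := by
          rw [Finset.sum_const, smul_eq_mul]
      _ ≤ ∑ v ∈ L d, ((L (d + 1)).filter (fun w => G.Adj v w)).card := by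
          refine Finset.sum_le_sum fun v hv => ?_
          have := hK4 d v hv hd1 hd2
          rwa [hc v hv] at this
      _ = ((L d).biUnion (fun v => (L (d + 1)).filter (fun w => G.Adj v w))).card :=
          (Finset.card_biUnion hdisj).symm
      _ ≤ (L (d + 1)).card := by
          refine Finset.card_le_card ?_
          intro w hw
          rw [Finset.mem_biUnion] at hw
          obtain ⟨v, -, hw⟩ := hw
          exact (Finset.mem_filter.mp hw).1
  -- degrees on even/odd levels
  have hcR : ∀ d : ℕ, Even d → ∀ v ∈ L d, (nb v).card = r := by
    intro d hd v hv
    have := (hLmem d v).mp hv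
    exact hdeg1' v ((hpar v).mpr (this ▸ hd))
  have hcS : ∀ d : ℕ, ¬ Even d → ∀ v ∈ L d, (nb v).card = s := by
    intro d hd v hv
    have hvd := (hLmem d v).mp hv
    have hv2 : v ∈ V2 := by
      rcases hpart v with ⟨h1, -⟩ | ⟨h1, -⟩
      · exact absurd ((hpar v).mp h1) (hvd ▸ hd)
      · exact h1
    exact hdeg2' v hv2
  -- base levels
  have hL1 : (L 1).card = r := by
    have : L 1 = nb u0 := by
      ext w
      rw [hLmem]
      simp [hnb, SimpleGraph.dist_eq_one_iff_adj]
    rw [this]; exact hdeg1' u0 hu0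
  have hL0 : (L 0).card = 1 := by
    have : L 0 = {u0} := by
      ext w
      rw [hLmem, Finset.mem_singleton]
      rw [hconn.dist_eq_zero_iff]
      exact eq_comm
    rw [this, Finset.card_singleton]
  -- growth of even levels
  have hgrow : ∀ i : ℕ, 1 ≤ i → i ≤ m →
      r * (s - 1) * ((r - 1) * (s - 1)) ^ (i - 1) ≤ (L (2 * i)).card := by
    intro i hi1
    induction i, hi1 using Nat.le_induction with
    | base =>
      intro _
      have h1 := hK5 1 le_rfl (by omega) s (hcS 1 (by simp) )
      rw [hL1] at h1
      simpa using h1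
    | succ i hi ih =>
      intro him
      have h1 := ih (by omega)
      have h2 := hK5 (2 * i) (by omega) (by omega) r (hcR (2 * i) (by simp))
      have h3 := hK5 (2 * i + 1) (by omega) (by omega) s (hcS (2 * i + 1) (by simp [Nat.even_add_one]))
      have he1 : 2 * (i + 1) = 2 * i + 1 + 1 := by omega
      rw [he1]
      have hchain : (L (2 * i)).card * (r - 1) * (s - 1) ≤ (L (2 * i + 1 + 1)).card :=
        le_trans (Nat.mul_le_mul_right _ h2) h3
      have hfinal : r * (s - 1) * ((r - 1) * (s - 1)) ^ (i + 1 - 1) ≤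
          (L (2 * i)).card * (r - 1) * (s - 1) := by
        have hpow : ((r - 1) * (s - 1)) ^ (i + 1 - 1) =
            ((r - 1) * (s - 1)) ^ (i - 1) * ((r - 1) * (s - 1)) := by
          rw [← pow_succ]
          congr 1
          omega
        rw [hpow]
        calc r * (s - 1) * (((r - 1) * (s - 1)) ^ (i - 1) * ((r - 1) * (s - 1)))
            = (r * (s - 1) * ((r - 1) * (s - 1)) ^ (i - 1)) * (r - 1) * (s - 1) := by ring
          _ ≤ (L (2 * i)).card * (r - 1) * (s - 1) :=
            Nat.mul_le_mul_right _ (Nat.mul_le_mul_right _ h1)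
      exact le_trans hfinal hchain
  -- sum the even levels into V1
  set S := ∑ i ∈ Finset.range m, ((r - 1) * (s - 1)) ^ i with hSdef
  have hA : 1 + r * (s - 1) * S ≤ V1.card := by
    have hdisj2 : ∀ i ∈ Finset.range (m + 1), ∀ j ∈ Finset.range (m + 1), i ≠ j →
        Disjoint (L (2 * i)) (L (2 * j)) := by
      intro i _ j _ hij
      rw [Finset.disjoint_left]
      intro v hv1 hv2
      rw [hLmem] at hv1 hv2
      omega
    have hsub : (Finset.range (m + 1)).biUnion (fun i => L (2 * i)) ⊆ V1 := by
      intro v hv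
      rw [Finset.mem_biUnion] at hv
      obtain ⟨i, -, hv⟩ := hv
      rw [hLmem] at hv
      exact (hpar v).mpr (hv ▸ (even_two_mul i))
    have hcards : ∑ i ∈ Finset.range (m + 1), (L (2 * i)).card ≤ V1.card := by
      rw [← Finset.card_biUnion hdisj2]
      exact Finset.card_le_card hsub
    have hsplit : ∑ i ∈ Finset.range (m + 1), (L (2 * i)).card =
        (∑ i ∈ Finset.range m, (L (2 * (i + 1))).card) + (L 0).card := by
      rw [Finset.sum_range_succ' (fun i => (L (2 * i)).card) m]
    have hterm : ∀ i ∈ Finset.range m,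
        r * (s - 1) * ((r - 1) * (s - 1)) ^ i ≤ (L (2 * (i + 1))).card := by
      intro i hi
      rw [Finset.mem_range] at hi
      have := hgrow (i + 1) (by omega) (by omega)
      simpa using this
    have hsum2 : r * (s - 1) * S ≤ ∑ i ∈ Finset.range m, (L (2 * (i + 1))).card := by
      rw [hSdef, Finset.mul_sum]
      exact Finset.sum_le_sum hterm
    omega
  -- handshake
  have hhs : r * V1.card = s * V2.card := by
    have hmemE : ∀ (W : Finset V) (p : V × V),
        p ∈ W.biUnion (fun v => ({v} : Finset V) ×ˢ nb v) ↔ p.1 ∈ W ∧ G.Adj p.1 p.2 := by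
      intro W p
      simp only [Finset.mem_biUnion, Finset.mem_product, Finset.mem_singleton, hnb,
        Finset.mem_filter, Finset.mem_univ, true_and]
      constructor
      · rintro ⟨v, hv, rfl, h⟩; exact ⟨hv, h⟩
      · rintro ⟨hv, h⟩; exact ⟨p.1, hv, rfl, h⟩
    have hcardE : ∀ (W : Finset V) (t : ℕ), (∀ v ∈ W, (nb v).card = t) →
        (W.biUnion (fun v => ({v} : Finset V) ×ˢ nb v)).card = t * W.card := by
      intro W t ht
      rw [Finset.card_biUnion]
      · rw [Finset.sum_congr rfl (fun v hv => by
          rw [Finset.card_product, Finset.card_singleton, one_mul, ht v hv])]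
        rw [Finset.sum_const, smul_eq_mul, mul_comm]
      · intro v1 _ v2 _ hne
        rw [Function.onFun, Finset.disjoint_left]
        rintro p hp1 hp2
        rw [Finset.mem_product, Finset.mem_singleton] at hp1 hp2
        exact hne (hp1.1 ▸ hp2.1)
    have h1 : (V1.biUnion (fun v => ({v} : Finset V) ×ˢ nb v)).card = r * V1.card :=
      hcardE V1 r hdeg1'
    have h2 : (V2.biUnion (fun v => ({v} : Finset V) ×ˢ nb v)).card = s * V2.card :=
      hcardE V2 s hdeg2'
    have hbijcard : (V1.biUnion (fun v => ({v} : Finset V) ×ˢ nb v)).card =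
        (V2.biUnion (fun v => ({v} : Finset V) ×ˢ nb v)).card := by
      refine Finset.card_bij' (fun p _ => (p.2, p.1)) (fun p _ => (p.2, p.1)) ?_ ?_ ?_ ?_
      · intro p hp
        rw [hmemE] at hp ⊢
        obtain ⟨hp1, hp2⟩ := hp
        exact ⟨hopp1 _ _ hp2 hp1, hp2.symm⟩
      · intro p hp
        rw [hmemE] at hp ⊢
        obtain ⟨hp1, hp2⟩ := hp
        exact ⟨hopp2 _ _ hp2 hp1, hp2.symm⟩
      · intro p _; rfl
      · intro p _; rfl
    omega
  -- arithmetic endgame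
  set g := Nat.gcd r s with hgdef
  set ρ := r / g with hρdef
  set σ := s / g with hσdef
  set q := (1 + s * (r - 1) * S) / ρ with hqdef
  have hgpos : 0 < g := Nat.gcd_pos_of_pos_right r (by omega)
  have hgr : g ∣ r := Nat.gcd_dvd_left r s
  have hgs : g ∣ s := Nat.gcd_dvd_right r s
  have hkey : s * ρ = r * σ := by
    rw [hρdef, hσdef, ← Nat.mul_div_assoc s hgr, ← Nat.mul_div_assoc r hgs, mul_comm s r]
  have hSpos : 1 ≤ S := by
    rw [hSdef]
    calc 1 = ((r - 1) * (s - 1)) ^ 0 := by norm_num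
      _ ≤ ∑ i ∈ Finset.range m, ((r - 1) * (s - 1)) ^ i :=
        Finset.single_le_sum (fun i _ => Nat.zero_le _) (by simp; omega)
  have horder' : V1.card + V2.card = q * (ρ + σ) := horder
  have hAq : V1.card = q * σ := by
    have h3 : s * (V1.card + V2.card) = V1.card * (r + s) := by
      rw [mul_add s, ← hhs]; ring
    have h4 : s * (V1.card + V2.card) = (q * σ) * (r + s) := by
      rw [horder']
      calc s * (q * (ρ + σ)) = q * (s * ρ) + q * (s * σ) := by ring
        _ = q * (r * σ) + q * (s * σ) := by rw [hkey]
        _ = (q * σ) * (r + s) := by ring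
    exact Nat.eq_of_mul_eq_mul_right (by omega) (h3.symm.trans h4)
  have hBq : V2.card = q * ρ := by
    have h5 : s * V2.card = s * (q * ρ) := by
      rw [← hhs, hAq]
      calc r * (q * σ) = q * (r * σ) := by ring
        _ = q * (s * ρ) := by rw [hkey]
        _ = s * (q * ρ) := by ring
    exact Nat.eq_of_mul_eq_mul_left (by omega) h5
  have hBle : V2.card ≤ 1 + s * (r - 1) * S := by
    rw [hBq, hqdef, mul_comm q ρ, mul_comm]
    exact Nat.div_mul_le_self _ _
  -- chain of inequalities
  have hchain : r * (1 + r * (s - 1) * S) ≤ s * (1 + s * (r - 1) * S) := by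
    calc r * (1 + r * (s - 1) * S) ≤ r * V1.card := Nat.mul_le_mul_left r hA
      _ = s * V2.card := hhs
      _ ≤ s * (1 + s * (r - 1) * S) := Nat.mul_le_mul_left s hBle
  exact absurd hchain (Nat.not_le.mpr (stmt4_arith_aux hs hrs hSpos))
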